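/- Let n, k, r be integers with k, r ≥ 2 and n ≥ k + 1. If H is a vertex-k-maximal r-uniform hypergraph on n vertices, then |E(H)| ≥ C(n, r) − C(n − k, r), where C(a, b) denotes the binomial coefficient (equal to 0 when b > a). -/

import Mathlib

/-- A finite hypergraph: a finite vertex set together with a finite set of
non-empty edges, each a subset of the vertex set. -/
structure FinHypergraph where
  verts : Finset ℕ
  edges : Finset (Finset ℕ)
  edge_sub : ∀ e ∈ edges, e ⊆ verts
  edge_nonempty : ∀ e ∈ edges, e.Nonempty

namespace FinHypergraph

/-- `H` is `r`-uniform if every edge has cardinality `r`. -/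
def IsUniform (H : FinHypergraph) (r : ℕ) : Prop := ∀ e ∈ H.edges, e.card = r

/-- `H'` is a subhypergraph of `H`. -/
def IsSub (H' H : FinHypergraph) : Prop := H'.verts ⊆ H.verts ∧ H'.edges ⊆ H.edges

/-- Two vertices are adjacent if some edge contains both. -/
def Adj (H : FinHypergraph) (u v : ℕ) : Prop := ∃ e ∈ H.edges, u ∈ e ∧ v ∈ e

/-- `H` is connected if every pair of vertices is joined by a path
(equivalently, a walk, i.e. is reachable via the adjacency relation). -/
def Connected (H : FinHypergraph) : Prop :=
  ∀ u ∈ H.verts, ∀ v ∈ H.verts, Relation.ReflTransGen H.Adj u v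

/-- The subhypergraph of `H` induced by the vertex set `Y`. -/
def induce (H : FinHypergraph) (Y : Finset ℕ) : FinHypergraph where
  verts := H.verts ∩ Y
  edges := H.edges.filter (fun e => e ⊆ Y)
  edge_sub := by
    intro e he
    simp only [Finset.mem_filter] at he
    exact Finset.subset_inter (H.edge_sub e he.1) he.2
  edge_nonempty := by
    intro e he
    simp only [Finset.mem_filter] at he
    exact H.edge_nonempty e he.1

/-- `X` is a vertex-cut of `H` if deleting `X` leaves a disconnected hypergraph. -/
def IsVertexCut (H : FinHypergraph) (X : Finset ℕ) : Prop :=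
  X ⊆ H.verts ∧ ¬ (H.induce (H.verts \ X)).Connected

open Classical in
/-- The vertex-connectivity of `H`: the minimum cardinality of a vertex-cut if one
exists, and `|V(H)| - 1` otherwise. -/
noncomputable def kappa (H : FinHypergraph) : ℕ :=
  if ∃ X, H.IsVertexCut X then sInf {m | ∃ X, H.IsVertexCut X ∧ X.card = m}
  else H.verts.card - 1

/-- `κ̄(H)`: the maximum vertex-connectivity over all subhypergraphs of `H`. -/
noncomputable def kappaBar (H : FinHypergraph) : ℕ :=
  sSup {m | ∃ H' : FinHypergraph, H'.IsSub H ∧ H'.kappa = m}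

/-- `H + e`: add the edge `e` (a non-empty subset of the vertices) to `H`. -/
def addEdge (H : FinHypergraph) (e : Finset ℕ) : FinHypergraph where
  verts := H.verts
  edges := if e ⊆ H.verts ∧ e.Nonempty then insert e H.edges else H.edges
  edge_sub := by
    intro f hf
    split at hf
    · rcases Finset.mem_insert.mp hf with rfl | hf
      · exact (by assumption : f ⊆ H.verts ∧ f.Nonempty).1
      · exact H.edge_sub f hf
    · exact H.edge_sub f hf
  edge_nonempty := by
    intro f hf
    split at hf
    · rcases Finset.mem_insert.mp hf with rfl | hf
      · exact (by assumption : f ⊆ H.verts ∧ f.Nonempty).2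
      · exact H.edge_nonempty f hf
    · exact H.edge_nonempty f hf

/-- `H + F`: add a set `F` of edges to `H`. -/
def addEdges (H : FinHypergraph) (F : Finset (Finset ℕ)) : FinHypergraph where
  verts := H.verts
  edges := H.edges ∪ F.filter (fun e => e ⊆ H.verts ∧ e.Nonempty)
  edge_sub := by
    intro f hf
    rcases Finset.mem_union.mp hf with hf | hf
    · exact H.edge_sub f hf
    · exact (Finset.mem_filter.mp hf).2.1
  edge_nonempty := by
    intro f hf
    rcases Finset.mem_union.mp hf with hf | hf
    · exact H.edge_nonempty f hf
    · exact (Finset.mem_filter.mp hf).2.2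

/-- `H` is vertex-`k`-maximal (as an `r`-uniform hypergraph): `κ̄(H) ≤ k`, but adding
any edge of the complement `H^c` creates a subhypergraph of connectivity at least `k + 1`. -/
def VertexKMaximal (H : FinHypergraph) (r k : ℕ) : Prop :=
  H.IsUniform r ∧ H.kappaBar ≤ k ∧
    ∀ e : Finset ℕ, e ⊆ H.verts → e.card = r → e ∉ H.edges →
      k + 1 ≤ (H.addEdge e).kappaBar

/-- The complete `r`-uniform hypergraph on the vertex set `V`. -/
def completeHG (V : Finset ℕ) (r : ℕ) : FinHypergraph where
  verts := V
  edges := (V.powersetCard r).filter (fun e => e.Nonempty)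
  edge_sub := by
    intro e he
    simp only [Finset.mem_filter, Finset.mem_powersetCard] at he
    exact he.1.1
  edge_nonempty := by
    intro e he
    exact (Finset.mem_filter.mp he).2

/-- The hypergraph on vertex set `V` with no edges. -/
def emptyHG (V : Finset ℕ) : FinHypergraph where
  verts := V
  edges := ∅
  edge_sub := by simp
  edge_nonempty := by simp

/-- The `r`-join `H₁ ∨_r H₂`: the union of `H₁` and `H₂` together with all
`r`-element subsets of `V(H₁) ∪ V(H₂)` meeting both `V(H₁)` and `V(H₂)`. -/
def rJoin (H1 H2 : FinHypergraph) (r : ℕ) : FinHypergraph where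
  verts := H1.verts ∪ H2.verts
  edges := H1.edges ∪ H2.edges ∪
    ((H1.verts ∪ H2.verts).powersetCard r).filter
      (fun e => (e ∩ H1.verts).Nonempty ∧ (e ∩ H2.verts).Nonempty)
  edge_sub := by
    intro e he
    rcases Finset.mem_union.mp he with he | he
    · rcases Finset.mem_union.mp he with he | he
      · exact (H1.edge_sub e he).trans Finset.subset_union_left
      · exact (H2.edge_sub e he).trans Finset.subset_union_right
    · exact (Finset.mem_powersetCard.mp (Finset.mem_filter.mp he).1).1
  edge_nonempty := by
    intro e he
    rcases Finset.mem_union.mp he with he | he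
    · rcases Finset.mem_union.mp he with he | he
      · exact H1.edge_nonempty e he
      · exact H2.edge_nonempty e he
    · obtain ⟨x, hx⟩ := (Finset.mem_filter.mp he).2.1
      exact ⟨x, (Finset.mem_inter.mp hx).1⟩

/-- The union of two hypergraphs. -/
def hUnion (H1 H2 : FinHypergraph) : FinHypergraph where
  verts := H1.verts ∪ H2.verts
  edges := H1.edges ∪ H2.edges
  edge_sub := by
    intro e he
    rcases Finset.mem_union.mp he with he | he
    · exact (H1.edge_sub e he).trans Finset.subset_union_left
    · exact (H2.edge_sub e he).trans Finset.subset_union_right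
  edge_nonempty := by
    intro e he
    rcases Finset.mem_union.mp he with he | he
    · exact H1.edge_nonempty e he
    · exact H2.edge_nonempty e he

/-- The union of the hypergraphs `f 0, …, f (m-1)`. -/
def unionOver (m : ℕ) (f : ℕ → FinHypergraph) : FinHypergraph where
  verts := (Finset.range m).biUnion (fun i => (f i).verts)
  edges := (Finset.range m).biUnion (fun i => (f i).edges)
  edge_sub := by
    intro e he
    obtain ⟨i, hi, hei⟩ := Finset.mem_biUnion.mp he
    exact ((f i).edge_sub e hei).trans (Finset.subset_biUnion_of_mem (fun i => (f i).verts) hi)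
  edge_nonempty := by
    intro e he
    obtain ⟨i, _, hei⟩ := Finset.mem_biUnion.mp he
    exact (f i).edge_nonempty e hei

/-- `C` is a component of `G`: a maximal connected subhypergraph. -/
def IsComponent (G C : FinHypergraph) : Prop :=
  C.IsSub G ∧ C.Connected ∧
    ∀ C' : FinHypergraph, C'.IsSub G → C'.Connected → C.IsSub C' → C' = C

/-- `(S, H₁, H₂)` is a separation triple of `H`: `S` is a minimum vertex-cut,
`H₁ = H[S ∪ V(C₁)]` and `H₂ = H[S ∪ V(C₂)]`, where `C₁` is a component of `H - S`
and `C₂ = H - (S ∪ V(C₁))`. -/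
def IsSeparationTriple (H : FinHypergraph) (S : Finset ℕ) (H1 H2 : FinHypergraph) : Prop :=
  H.IsVertexCut S ∧ (∀ X : Finset ℕ, H.IsVertexCut X → S.card ≤ X.card) ∧
    ∃ C1 : FinHypergraph, IsComponent (H.induce (H.verts \ S)) C1 ∧
      H1 = H.induce (S ∪ C1.verts) ∧
      H2 = H.induce (S ∪ (H.verts \ (S ∪ C1.verts)))

end FinHypergraph
namespace FinHypergraph

attribute [local instance 10] Classical.propDecidable

variable {H H' H'' G : FinHypergraph} {X Y S A B f g : Finset ℕ} {k r : ℕ}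

lemma isSub_refl (H : FinHypergraph) : H.IsSub H :=
  ⟨Finset.Subset.refl _, Finset.Subset.refl _⟩

lemma IsSub.trans {H1 H2 H3 : FinHypergraph} (h12 : H1.IsSub H2) (h23 : H2.IsSub H3) :
    H1.IsSub H3 := ⟨h12.1.trans h23.1, h12.2.trans h23.2⟩

lemma induce_verts (H : FinHypergraph) (hY : Y ⊆ H.verts) : (H.induce Y).verts = Y :=
  Finset.inter_eq_right.mpr hY

lemma mem_induce_edges : g ∈ (H.induce Y).edges ↔ g ∈ H.edges ∧ g ⊆ Y :=
  Finset.mem_filter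

lemma induce_isSub (H : FinHypergraph) (Y : Finset ℕ) : (H.induce Y).IsSub H :=
  ⟨Finset.inter_subset_left, Finset.filter_subset _ _⟩

lemma addEdge_verts (H : FinHypergraph) (e : Finset ℕ) : (H.addEdge e).verts = H.verts := rfl

lemma addEdge_edges (h1 : f ⊆ H.verts) (h2 : f.Nonempty) :
    (H.addEdge f).edges = insert f H.edges := by
  show (if f ⊆ H.verts ∧ f.Nonempty then insert f H.edges else H.edges) = _
  rw [if_pos ⟨h1, h2⟩]

lemma kappa_le_of_cut (h : H.IsVertexCut X) : H.kappa ≤ X.card := by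
  unfold kappa
  rw [if_pos ⟨X, h⟩]
  exact Nat.sInf_le ⟨X, h, rfl⟩

lemma kappa_le_card (H : FinHypergraph) : H.kappa ≤ H.verts.card := by
  unfold kappa
  split
  · next h =>
      obtain ⟨X, hX⟩ := h
      have hmem : X.card ∈ {m | ∃ X : Finset ℕ, H.IsVertexCut X ∧ X.card = m} := ⟨X, hX, rfl⟩
      exact (Nat.sInf_le hmem).trans (Finset.card_le_card hX.1)
  · omega

lemma exists_cut_card_kappa (hc : ∃ X, H.IsVertexCut X) :
    ∃ S : Finset ℕ, H.IsVertexCut S ∧ S.card = H.kappa := by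
  unfold kappa
  rw [if_pos hc]
  obtain ⟨X, hX⟩ := hc
  have hne : {m | ∃ X, H.IsVertexCut X ∧ X.card = m}.Nonempty := ⟨X.card, X, hX, rfl⟩
  obtain ⟨S, hS, hSc⟩ := Nat.sInf_mem hne
  exact ⟨S, hS, hSc⟩

lemma exists_cut_of_kappa_lt (h : H.kappa + 2 ≤ H.verts.card) :
    ∃ S : Finset ℕ, H.IsVertexCut S ∧ S.card = H.kappa := by
  by_cases hc : ∃ X, H.IsVertexCut X
  · exact exists_cut_card_kappa hc
  · exfalso
    have : H.kappa = H.verts.card - 1 := by unfold kappa; rw [if_neg hc]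
    omega

lemma connected_of_card_lt (hX : X ⊆ H.verts) (h : X.card < H.kappa) :
    (H.induce (H.verts \ X)).Connected := by
  by_contra hC
  exact absurd (kappa_le_of_cut ⟨hX, hC⟩) (Nat.not_le.mpr h)

lemma kappaBar_bddAbove (H : FinHypergraph) :
    BddAbove {m | ∃ H' : FinHypergraph, H'.IsSub H ∧ H'.kappa = m} := by
  refine ⟨H.verts.card, ?_⟩
  rintro m ⟨G, hG, rfl⟩
  exact (kappa_le_card G).trans (Finset.card_le_card hG.1)

lemma kappaBar_nonempty (H : FinHypergraph) :
    {m | ∃ H' : FinHypergraph, H'.IsSub H ∧ H'.kappa = m}.Nonempty :=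
  ⟨H.kappa, H, isSub_refl H, rfl⟩

lemma kappa_le_kappaBar (h : H'.IsSub H) : H'.kappa ≤ H.kappaBar := by
  unfold kappaBar
  exact le_csSup (kappaBar_bddAbove H) (⟨H', h, rfl⟩ :
    H'.kappa ∈ {m | ∃ H' : FinHypergraph, H'.IsSub H ∧ H'.kappa = m})

lemma exists_high_sub (h : k + 1 ≤ G.kappaBar) :
    ∃ H'' : FinHypergraph, H''.IsSub G ∧ k + 1 ≤ H''.kappa := by
  obtain ⟨K, hK, hKe⟩ := Nat.sSup_mem (kappaBar_nonempty G) (kappaBar_bddAbove G)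
  unfold kappaBar at h
  rw [← hKe] at h
  exact ⟨K, hK, h⟩

lemma kappaBar_mono (h : H'.IsSub H) : H'.kappaBar ≤ H.kappaBar := by
  unfold kappaBar
  apply csSup_le (kappaBar_nonempty H')
  rintro m ⟨K, hK, rfl⟩
  exact kappa_le_kappaBar (hK.trans h)

lemma reach_stay {G : FinHypergraph} {A : Finset ℕ}
    (hcl : ∀ g ∈ G.edges, ∀ x ∈ g, x ∈ A → g ⊆ A)
    {u v : ℕ} (h : Relation.ReflTransGen G.Adj u v) (hu : u ∈ A) : v ∈ A := by
  induction h with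
  | refl => exact hu
  | tail h1 h2 ih =>
      obtain ⟨g, hg, hb, hc⟩ := h2
      exact hcl g hg _ hb ih hc

lemma not_connected_of_isolated {G : FinHypergraph} {u v : ℕ} (hu : u ∈ G.verts)
    (hv : v ∈ G.verts) (huv : u ≠ v) (h : ∀ g ∈ G.edges, u ∉ g) : ¬ G.Connected := by
  intro hC
  rcases (hC u hu v hv).cases_head with h1 | ⟨c, ⟨g, hg, hug, _⟩, _⟩
  · exact huv h1
  · exact h g hg hug

lemma le_card_of_kappa (hr : 2 ≤ r) (hU : ∀ g ∈ G.edges, g.card = r) (hg0 : g ∈ G.edges)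
    (hk : k + 1 ≤ G.kappa) : k + r ≤ G.verts.card := by
  have hgV : g ⊆ G.verts := G.edge_sub g hg0
  have hgc : g.card = r := hU g hg0
  rcases Nat.lt_or_ge r 3 with h3 | h3
  · -- r = 2
    have hr2 : r = 2 := by omega
    by_cases hc : ∃ X, G.IsVertexCut X
    · obtain ⟨S, hS, hSc⟩ := exists_cut_card_kappa hc
      have hkS : k + 1 ≤ S.card := by omega
      have hC := hS.2
      unfold Connected at hC
      push_neg at hC
      obtain ⟨u, hu, v, hv, hnr⟩ := hC
      rw [induce_verts _ Finset.sdiff_subset] at hu hv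
      have huv : u ≠ v := by rintro rfl; exact hnr Relation.ReflTransGen.refl
      have hsub : insert u (insert v S) ⊆ G.verts := by
        intro z hz
        rcases Finset.mem_insert.mp hz with rfl | hz
        · exact (Finset.mem_sdiff.mp hu).1
        rcases Finset.mem_insert.mp hz with rfl | hz
        · exact (Finset.mem_sdiff.mp hv).1
        · exact hS.1 hz
      have hcard : (insert u (insert v S)).card = S.card + 2 := by
        rw [Finset.card_insert_of_notMem, Finset.card_insert_of_notMem]
        · exact (Finset.mem_sdiff.mp hv).2
        · intro h
          rcases Finset.mem_insert.mp h with rfl | h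
          · exact huv rfl
          · exact (Finset.mem_sdiff.mp hu).2 h
      have := Finset.card_le_card hsub
      omega
    · have : G.kappa = G.verts.card - 1 := by unfold kappa; rw [if_neg hc]
      have : 1 ≤ G.verts.card := by
        have := Finset.card_le_card hgV
        omega
      omega
  · -- r ≥ 3
    obtain ⟨T, hTg, hTc⟩ := Finset.exists_subset_card_eq (s := g) (n := r - 1) (by omega)
    have hTV : T ⊆ G.verts := hTg.trans hgV
    have hXcut : G.IsVertexCut (G.verts \ T) := by
      refine ⟨Finset.sdiff_subset, ?_⟩
      have hrest : G.verts \ (G.verts \ T) = T := by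
        rw [Finset.sdiff_sdiff_self_left]
        exact Finset.inter_eq_right.mpr hTV
      obtain ⟨u, hu, v, hv, huv⟩ := Finset.one_lt_card.mp (by omega : 1 < T.card)
      apply not_connected_of_isolated (u := u) (v := v)
      · rw [induce_verts _ Finset.sdiff_subset, hrest]; exact hu
      · rw [induce_verts _ Finset.sdiff_subset, hrest]; exact hv
      · exact huv
      · intro e he hue
        have he' := mem_induce_edges.mp he
        have : e.card ≤ T.card := Finset.card_le_card (hrest ▸ he'.2)
        rw [hU e he'.1, hTc] at this
        omega
    have h1 := kappa_le_of_cut hXcut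
    have h2 : (G.verts \ T).card = G.verts.card - T.card := Finset.card_sdiff_of_subset hTV
    have h3 := Finset.card_le_card hTV
    omega

lemma witness_lemma (hr : 2 ≤ r) (hU : H.IsUniform r) (hkb : H.kappaBar ≤ k)
    (hfV : f ⊆ H.verts) (hfc : f.card = r) (hfE : f ∉ H.edges)
    (hmax : k + 1 ≤ (H.addEdge f).kappaBar) :
    ∃ H'' : FinHypergraph, H''.IsSub (H.addEdge f) ∧ k + 1 ≤ H''.kappa ∧ f ∈ H''.edges ∧
      (∀ g ∈ H''.edges, g.card = r) ∧ k + r ≤ H''.verts.card ∧ H''.verts ⊆ H.verts := by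
  obtain ⟨H'', hsub, hκ⟩ := exists_high_sub hmax
  have hfne : f.Nonempty := Finset.card_pos.mp (by omega)
  have hedges : (H.addEdge f).edges = insert f H.edges := addEdge_edges hfV hfne
  have hVsub : H''.verts ⊆ H.verts := hsub.1
  have hfE'' : f ∈ H''.edges := by
    by_contra hf
    have hsubH : H''.IsSub H := by
      refine ⟨hVsub, ?_⟩
      intro g hg
      have := hsub.2 hg
      rw [hedges, Finset.mem_insert] at this
      rcases this with rfl | h
      · exact absurd hg hf
      · exact h
    have := (kappa_le_kappaBar hsubH).trans hkb
    omega
  have hU'' : ∀ g ∈ H''.edges, g.card = r := by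
    intro g hg
    have := hsub.2 hg
    rw [hedges, Finset.mem_insert] at this
    rcases this with rfl | h
    · exact hfc
    · exact hU g h
  exact ⟨H'', hsub, hκ, hfE'', hU'', le_card_of_kappa hr hU'' hfE'' hκ, hVsub⟩

end FinHypergraph
namespace FinHypergraph

attribute [local instance 10] Classical.propDecidable

variable {H H' H'' G : FinHypergraph} {X Y S A B f g : Finset ℕ} {k r : ℕ}

lemma choose_add_choose_le (hr : 1 ≤ r) (x y : ℕ) :
    x.choose r + y.choose r ≤ (x + y).choose r := by
  classical
  set s1 := (Finset.range x).powersetCard r with hs1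
  set s2 := ((Finset.range (x + y)) \ Finset.range x).powersetCard r with hs2
  have hsub : s1 ∪ s2 ⊆ (Finset.range (x + y)).powersetCard r := by
    intro s hs
    rcases Finset.mem_union.mp hs with h | h <;>
      rw [Finset.mem_powersetCard] at h ⊢ <;>
      refine ⟨h.1.trans ?_, h.2⟩
    · intro z hz; rw [Finset.mem_range] at hz ⊢; omega
    · exact Finset.sdiff_subset
  have hdisj : Disjoint s1 s2 := by
    rw [Finset.disjoint_left]
    intro s h1 h2
    rw [Finset.mem_powersetCard] at h1 h2
    have hne : s.Nonempty := Finset.card_pos.mp (by omega)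
    obtain ⟨z, hz⟩ := hne
    have hz1 := h1.1 hz
    have hz2 := h2.1 hz
    rw [Finset.mem_sdiff] at hz2
    exact hz2.2 hz1
  have hcard := Finset.card_le_card hsub
  rw [Finset.card_union_of_disjoint hdisj] at hcard
  have e1 : s1.card = x.choose r := by rw [hs1, Finset.card_powersetCard, Finset.card_range]
  have e2 : s2.card = y.choose r := by
    rw [hs2, Finset.card_powersetCard, Finset.card_sdiff_of_subset (by
      intro z hz; rw [Finset.mem_range] at hz ⊢; omega), Finset.card_range, Finset.card_range]
    congr 1
    omega
  have e3 : ((Finset.range (x + y)).powersetCard r).card = (x + y).choose r := by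
    rw [Finset.card_powersetCard, Finset.card_range]
  omega

lemma isSub_addEdge_induce (hYV : Y ⊆ H.verts) (hfY : f ⊆ Y) (hfne : f.Nonempty)
    (hsub : H''.IsSub (H.addEdge f)) (hV'' : H''.verts ⊆ Y) :
    H''.IsSub ((H.induce Y).addEdge f) := by
  have hfV : f ⊆ H.verts := hfY.trans hYV
  constructor
  · rw [addEdge_verts, induce_verts _ hYV]
    exact hV''
  · intro g hg
    have hg' := hsub.2 hg
    rw [addEdge_edges hfV hfne] at hg'
    rw [addEdge_edges (by rw [induce_verts _ hYV]; exact hfY) hfne]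
    rcases Finset.mem_insert.mp hg' with rfl | h
    · exact Finset.mem_insert_self _ _
    · exact Finset.mem_insert_of_mem (mem_induce_edges.mpr ⟨h, (H''.edge_sub g hg).trans hV''⟩)

lemma sides_of_connected
    (hdisj : Disjoint A B)
    (hpart : H.verts \ S = A ∪ B)
    (hcl : ∀ g ∈ H.edges, g ⊆ H.verts \ S → g ⊆ A ∨ g ⊆ B)
    (hE'' : H''.edges ⊆ insert f H.edges)
    (hYsub : Y ⊆ H''.verts) (hYS : Y ⊆ H.verts \ S)
    (hfY : f ⊆ Y → f ⊆ A ∨ f ⊆ B)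
    (hconn : (H''.induce Y).Connected) :
    Y ⊆ A ∨ Y ⊆ B := by
  by_cases hYA : ∃ u ∈ Y, u ∈ A
  · left
    obtain ⟨u, huY, huA⟩ := hYA
    intro v hvY
    have hverts : (H''.induce Y).verts = Y := induce_verts _ hYsub
    have hreach := hconn u (by rw [hverts]; exact huY) v (by rw [hverts]; exact hvY)
    refine reach_stay ?_ hreach huA
    intro g hg x hxg hxA
    have hg' := mem_induce_edges.mp hg
    have hside : g ⊆ A ∨ g ⊆ B := by
      rcases Finset.mem_insert.mp (hE'' hg'.1) with rfl | h
      · exact hfY hg'.2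
      · exact hcl g h (hg'.2.trans hYS)
    rcases hside with h | h
    · exact h
    · exact absurd (h hxg) (fun hB => (Finset.disjoint_left.mp hdisj hxA hB))
  · right
    intro v hv
    have : v ∈ A ∪ B := hpart ▸ hYS hv
    rcases Finset.mem_union.mp this with h | h
    · exact absurd ⟨v, hv, h⟩ hYA
    · exact h

lemma confine_core
    (hSk : S.card ≤ k)
    (hdisj : Disjoint A B)
    (hpart : H.verts \ S = A ∪ B)
    (hcl : ∀ g ∈ H.edges, g ⊆ H.verts \ S → g ⊆ A ∨ g ⊆ B)
    (hfV : f ⊆ H.verts) (hfne : f.Nonempty)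
    (hsub : H''.IsSub (H.addEdge f)) (hκ : k + 1 ≤ H''.kappa)
    (hfside : f ⊆ A ∨ f ⊆ B ∨ (∃ x ∈ f, x ∈ S)) :
    H''.verts \ S ⊆ A ∨ H''.verts \ S ⊆ B := by
  have hV'' : H''.verts ⊆ H.verts := hsub.1
  have hXsub : S ∩ H''.verts ⊆ H''.verts := Finset.inter_subset_right
  have hXcard : (S ∩ H''.verts).card ≤ k :=
    le_trans (Finset.card_le_card Finset.inter_subset_left) hSk
  have hconn := connected_of_card_lt hXsub (by omega)
  have hrw : H''.verts \ (S ∩ H''.verts) = H''.verts \ S := by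
    ext z
    simp only [Finset.mem_sdiff, Finset.mem_inter]
    tauto
  rw [hrw] at hconn
  refine sides_of_connected (f := f) hdisj hpart hcl ?_ Finset.sdiff_subset ?_ ?_ hconn
  · rw [← addEdge_edges hfV hfne]
    exact hsub.2
  · intro z hz
    have := Finset.mem_sdiff.mp hz
    exact Finset.mem_sdiff.mpr ⟨hV'' this.1, this.2⟩
  · intro hf
    rcases hfside with h | h | ⟨x, hxf, hxS⟩
    · exact Or.inl h
    · exact Or.inr h
    · exact absurd hxS (Finset.mem_sdiff.mp (hf hxf)).2

lemma confine_inA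
    (hSk : S.card ≤ k)
    (hdisj : Disjoint A B)
    (hpart : H.verts \ S = A ∪ B)
    (hcl : ∀ g ∈ H.edges, g ⊆ H.verts \ S → g ⊆ A ∨ g ⊆ B)
    (hfV : f ⊆ H.verts) (hfne : f.Nonempty)
    (hsub : H''.IsSub (H.addEdge f)) (hκ : k + 1 ≤ H''.kappa) (hfe : f ∈ H''.edges)
    (hfA : ∀ x ∈ f, x ∉ S → x ∈ A) (hfnS : ∃ x ∈ f, x ∉ S) :
    H''.verts ⊆ S ∪ A := by
  obtain ⟨x0, hx0f, hx0S⟩ := hfnS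
  have hx0A : x0 ∈ A := hfA x0 hx0f hx0S
  have hfV'' : f ⊆ H''.verts := H''.edge_sub f hfe
  have hfside : f ⊆ A ∨ f ⊆ B ∨ (∃ x ∈ f, x ∈ S) := by
    by_cases hS : ∃ x ∈ f, x ∈ S
    · exact Or.inr (Or.inr hS)
    · push_neg at hS
      exact Or.inl (fun z hz => hfA z hz (hS z hz))
  rcases confine_core hSk hdisj hpart hcl hfV hfne hsub hκ hfside with h | h
  · intro z hz
    by_cases hzS : z ∈ S
    · exact Finset.mem_union_left _ hzS
    · exact Finset.mem_union_right _ (h (Finset.mem_sdiff.mpr ⟨hz, hzS⟩))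
  · exfalso
    have : x0 ∈ B := h (Finset.mem_sdiff.mpr ⟨hfV'' hx0f, hx0S⟩)
    exact Finset.disjoint_left.mp hdisj hx0A this

lemma confine_inS
    (hSk : S.card ≤ k)
    (hdisj : Disjoint A B)
    (hpart : H.verts \ S = A ∪ B)
    (hcl : ∀ g ∈ H.edges, g ⊆ H.verts \ S → g ⊆ A ∨ g ⊆ B)
    (hfV : f ⊆ H.verts) (hfne : f.Nonempty)
    (hsub : H''.IsSub (H.addEdge f)) (hκ : k + 1 ≤ H''.kappa)
    (hfS : f ⊆ S) :
    H''.verts ⊆ S ∪ A ∨ H''.verts ⊆ S ∪ B := by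
  obtain ⟨x0, hx0⟩ := id hfne
  have hfside : f ⊆ A ∨ f ⊆ B ∨ (∃ x ∈ f, x ∈ S) := Or.inr (Or.inr ⟨x0, hx0, hfS hx0⟩)
  have hsplit : ∀ z ∈ H''.verts, z ∈ S ∨ z ∈ H''.verts \ S := by
    intro z hz
    by_cases hzS : z ∈ S
    · exact Or.inl hzS
    · exact Or.inr (Finset.mem_sdiff.mpr ⟨hz, hzS⟩)
  rcases confine_core hSk hdisj hpart hcl hfV hfne hsub hκ hfside with h | h
  · left
    intro z hz
    rcases hsplit z hz with h1 | h1
    · exact Finset.mem_union_left _ h1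
    · exact Finset.mem_union_right _ (h h1)
  · right
    intro z hz
    rcases hsplit z hz with h1 | h1
    · exact Finset.mem_union_left _ h1
    · exact Finset.mem_union_right _ (h h1)

lemma cross_meet_false
    (hSk : S.card ≤ k)
    (hdisj : Disjoint A B)
    (hpart : H.verts \ S = A ∪ B)
    (hcl : ∀ g ∈ H.edges, g ⊆ H.verts \ S → g ⊆ A ∨ g ⊆ B)
    (hfV : f ⊆ H.verts) (hfne : f.Nonempty)
    (hsub : H''.IsSub (H.addEdge f)) (hκ : k + 1 ≤ H''.kappa) (hfe : f ∈ H''.edges)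
    (hfA : ∃ x ∈ f, x ∈ A) (hfB : ∃ x ∈ f, x ∈ B) (hfS : ∃ x ∈ f, x ∈ S) :
    False := by
  obtain ⟨xa, hxaf, hxaA⟩ := hfA
  obtain ⟨xb, hxbf, hxbB⟩ := hfB
  have hfV'' : f ⊆ H''.verts := H''.edge_sub f hfe
  have hAS : xa ∉ S := by
    have : xa ∈ H.verts \ S := hpart ▸ Finset.mem_union_left _ hxaA
    exact (Finset.mem_sdiff.mp this).2
  have hBS : xb ∉ S := by
    have : xb ∈ H.verts \ S := hpart ▸ Finset.mem_union_right _ hxbB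
    exact (Finset.mem_sdiff.mp this).2
  rcases confine_core hSk hdisj hpart hcl hfV hfne hsub hκ (Or.inr (Or.inr hfS)) with h | h
  · have : xb ∈ A := h (Finset.mem_sdiff.mpr ⟨hfV'' hxbf, hBS⟩)
    exact Finset.disjoint_left.mp hdisj this hxbB
  · have : xa ∈ B := h (Finset.mem_sdiff.mpr ⟨hfV'' hxaf, hAS⟩)
    exact Finset.disjoint_left.mp hdisj hxaA this

end FinHypergraph
namespace FinHypergraph

attribute [local instance 10] Classical.propDecidable

variable {H H' H'' G : FinHypergraph} {X Y S A B f g : Finset ℕ} {k r : ℕ}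

lemma cross_avoid_false2
    (hSk' : S.card < k)
    (hdisj : Disjoint A B)
    (hpart : H.verts \ S = A ∪ B)
    (hcl : ∀ g ∈ H.edges, g ⊆ H.verts \ S → g ⊆ A ∨ g ⊆ B)
    (hfV : f ⊆ H.verts) (hfne : f.Nonempty) (hfE : f ∉ H.edges)
    (hsub : H''.IsSub (H.addEdge f)) (hκ : k + 1 ≤ H''.kappa) (hfe : f ∈ H''.edges)
    (hfS : ∀ x ∈ f, x ∉ S)
    {x x' y : ℕ} (hx : x ∈ f) (hxA : x ∈ A) (hx' : x' ∈ f) (hx'A : x' ∈ A)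
    (hxx' : x ≠ x') (hy : y ∈ f) (hyB : y ∈ B) : False := by
  have hV'' : H''.verts ⊆ H.verts := hsub.1
  have hfV'' : f ⊆ H''.verts := H''.edge_sub f hfe
  set X := (S ∩ H''.verts) ∪ {x} with hX
  have hXsub : X ⊆ H''.verts := by
    intro z hz
    rcases Finset.mem_union.mp hz with h | h
    · exact (Finset.mem_inter.mp h).2
    · rw [Finset.mem_singleton] at h; exact h ▸ hfV'' hx
  have hXcard : X.card ≤ k := by
    rw [hX]
    have h1 := Finset.card_union_le (S ∩ H''.verts) {x}
    have h2 : (S ∩ H''.verts).card ≤ S.card := Finset.card_le_card Finset.inter_subset_left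
    simp only [Finset.card_singleton] at h1
    omega
  have hconn := connected_of_card_lt hXsub (by omega)
  set YY := H''.verts \ X with hYY
  have hYS : YY ⊆ H.verts \ S := by
    intro z hz
    rw [Finset.mem_sdiff] at hz ⊢
    refine ⟨hV'' hz.1, fun hzS => hz.2 ?_⟩
    exact Finset.mem_union_left _ (Finset.mem_inter.mpr ⟨hzS, hz.1⟩)
  have hxX : x ∈ X := Finset.mem_union_right _ (Finset.mem_singleton_self x)
  have hsides := sides_of_connected (f := f) hdisj hpart hcl
    (by rw [← addEdge_edges hfV hfne]; exact hsub.2) Finset.sdiff_subset hYS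
    (fun hfYY => absurd (hfYY hx) (fun h => (Finset.mem_sdiff.mp h).2 hxX)) hconn
  have hx'YY : x' ∈ YY := by
    rw [Finset.mem_sdiff]
    refine ⟨hfV'' hx', fun h => ?_⟩
    rcases Finset.mem_union.mp h with h | h
    · exact hfS x' hx' (Finset.mem_inter.mp h).1
    · rw [Finset.mem_singleton] at h; exact hxx' h.symm
  have hyYY : y ∈ YY := by
    rw [Finset.mem_sdiff]
    refine ⟨hfV'' hy, fun h => ?_⟩
    rcases Finset.mem_union.mp h with h | h
    · exact hfS y hy (Finset.mem_inter.mp h).1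
    · rw [Finset.mem_singleton] at h
      exact Finset.disjoint_left.mp hdisj (h ▸ hxA) hyB
  rcases hsides with h | h
  · exact Finset.disjoint_left.mp hdisj (h hyYY) hyB
  · exact Finset.disjoint_left.mp hdisj hx'A (h hx'YY)

lemma cross_avoid_false_r2
    (hr : 2 ≤ r) (hU : H.IsUniform r)
    (hSk' : S.card < k)
    (hdisj : Disjoint A B)
    (hpart : H.verts \ S = A ∪ B)
    (hcl : ∀ g ∈ H.edges, g ⊆ H.verts \ S → g ⊆ A ∨ g ⊆ B)
    (hfV : f ⊆ H.verts) (hfc : f.card = r) (hfE : f ∉ H.edges)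
    (hsub : H''.IsSub (H.addEdge f)) (hκ : k + 1 ≤ H''.kappa) (hfe : f ∈ H''.edges)
    (hVbig : k + r ≤ H''.verts.card)
    (hfS : ∀ x ∈ f, x ∉ S)
    {x y : ℕ} (hfxy : f = {x, y}) (hxA : x ∈ A) (hyB : y ∈ B) : False := by
  have hfne : f.Nonempty := Finset.card_pos.mp (by omega)
  have hV'' : H''.verts ⊆ H.verts := hsub.1
  have hfV'' : f ⊆ H''.verts := H''.edge_sub f hfe
  have hxy : x ≠ y := fun h => Finset.disjoint_left.mp hdisj (h ▸ hxA) hyB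
  have hxf : x ∈ f := by rw [hfxy]; exact Finset.mem_insert_self _ _
  have hyf : y ∈ f := by rw [hfxy]; exact Finset.mem_insert_of_mem (Finset.mem_singleton_self _)
  -- Step 1 : V'' \ S \ {x} ⊆ B
  set X1 := (S ∩ H''.verts) ∪ {x} with hX1
  have hX1sub : X1 ⊆ H''.verts := by
    intro z hz
    rcases Finset.mem_union.mp hz with h | h
    · exact (Finset.mem_inter.mp h).2
    · rw [Finset.mem_singleton] at h; exact h ▸ hfV'' hxf
  have hX1card : X1.card ≤ k := by
    rw [hX1]
    have h1 := Finset.card_union_le (S ∩ H''.verts) {x}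
    have h2 : (S ∩ H''.verts).card ≤ S.card := Finset.card_le_card Finset.inter_subset_left
    simp only [Finset.card_singleton] at h1
    omega
  have hconn1 := connected_of_card_lt hX1sub (by omega)
  set Y1 := H''.verts \ X1 with hY1
  have hY1S : Y1 ⊆ H.verts \ S := by
    intro z hz
    rw [Finset.mem_sdiff] at hz ⊢
    refine ⟨hV'' hz.1, fun hzS => hz.2 ?_⟩
    exact Finset.mem_union_left _ (Finset.mem_inter.mpr ⟨hzS, hz.1⟩)
  have hY1B : Y1 ⊆ B := by
    have hsides := sides_of_connected (f := f) hdisj hpart hcl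
      (by rw [← addEdge_edges hfV hfne]; exact hsub.2) Finset.sdiff_subset hY1S
      (fun hfY => absurd (hfY hxf)
        (fun h => (Finset.mem_sdiff.mp h).2
          (Finset.mem_union_right _ (Finset.mem_singleton_self x)))) hconn1
    have hyY1 : y ∈ Y1 := by
      rw [Finset.mem_sdiff]
      refine ⟨hfV'' hyf, fun h => ?_⟩
      rcases Finset.mem_union.mp h with h | h
      · exact hfS y hyf (Finset.mem_inter.mp h).1
      · rw [Finset.mem_singleton] at h; exact hxy h.symm
    rcases hsides with h | h
    · exact absurd (h hyY1) (fun hA => Finset.disjoint_left.mp hdisj hA hyB)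
    · exact h
  -- Step 2 : isolate x after removing (S ∩ V'') ∪ {y}
  set X2 := (S ∩ H''.verts) ∪ {y} with hX2
  have hX2sub : X2 ⊆ H''.verts := by
    intro z hz
    rcases Finset.mem_union.mp hz with h | h
    · exact (Finset.mem_inter.mp h).2
    · rw [Finset.mem_singleton] at h; exact h ▸ hfV'' hyf
  have hX2card : X2.card ≤ k := by
    rw [hX2]
    have h1 := Finset.card_union_le (S ∩ H''.verts) {y}
    have h2 : (S ∩ H''.verts).card ≤ S.card := Finset.card_le_card Finset.inter_subset_left
    simp only [Finset.card_singleton] at h1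
    omega
  have hconn2 := connected_of_card_lt hX2sub (by omega)
  set Y2 := H''.verts \ X2 with hY2v
  have hxY2 : x ∈ Y2 := by
    rw [Finset.mem_sdiff]
    refine ⟨hfV'' hxf, fun h => ?_⟩
    rcases Finset.mem_union.mp h with h | h
    · exact hfS x hxf (Finset.mem_inter.mp h).1
    · rw [Finset.mem_singleton] at h; exact hxy h
  have hY2card : 1 < Y2.card := by
    have h1 : H''.verts.card - X2.card ≤ Y2.card := Finset.le_card_sdiff X2 H''.verts
    omega
  obtain ⟨z, hzY2, hzx⟩ := Finset.exists_mem_ne hY2card x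
  have hverts2 : (H''.induce Y2).verts = Y2 := induce_verts _ Finset.sdiff_subset
  have hiso : ∀ g ∈ (H''.induce Y2).edges, x ∉ g := by
    intro g hg hxg
    have hg' := mem_induce_edges.mp hg
    have hgE : g ∈ insert f H.edges := by
      rw [← addEdge_edges hfV hfne]
      exact hsub.2 hg'.1
    rcases Finset.mem_insert.mp hgE with rfl | hgE
    · have : y ∈ Y2 := hg'.2 hyf
      exact (Finset.mem_sdiff.mp this).2
        (Finset.mem_union_right _ (Finset.mem_singleton_self y))
    · have hgS : g ⊆ H.verts \ S := by
        intro w hw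
        have hwY2 := hg'.2 hw
        rw [Finset.mem_sdiff] at hwY2 ⊢
        refine ⟨hV'' hwY2.1, fun hwS => hwY2.2 ?_⟩
        exact Finset.mem_union_left _ (Finset.mem_inter.mpr ⟨hwS, hwY2.1⟩)
      have hgA : g ⊆ A := by
        rcases hcl g hgE hgS with h | h
        · exact h
        · exact absurd (h hxg) (fun hB => Finset.disjoint_left.mp hdisj hxA hB)
      have hgcard : 1 < g.card := by rw [hU g hgE]; omega
      obtain ⟨w, hwg, hwx⟩ := Finset.exists_mem_ne hgcard x
      have hwY1 : w ∈ Y1 := by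
        have hwY2 := hg'.2 hwg
        rw [Finset.mem_sdiff] at hwY2 ⊢
        refine ⟨hwY2.1, fun h => ?_⟩
        rcases Finset.mem_union.mp h with h | h
        · exact hwY2.2 (Finset.mem_union_left _ h)
        · rw [Finset.mem_singleton] at h; exact hwx h
      exact Finset.disjoint_left.mp hdisj (hgA hwg) (hY1B hwY1)
  exact not_connected_of_isolated (by rw [hverts2]; exact hxY2)
    (by rw [hverts2]; exact hzY2) (fun h => hzx h.symm) hiso hconn2

lemma cross_avoid_false
    (hr : 2 ≤ r) (hU : H.IsUniform r)
    (hSk' : S.card < k)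
    (hdisj : Disjoint A B)
    (hpart : H.verts \ S = A ∪ B)
    (hcl : ∀ g ∈ H.edges, g ⊆ H.verts \ S → g ⊆ A ∨ g ⊆ B)
    (hfV : f ⊆ H.verts) (hfc : f.card = r) (hfE : f ∉ H.edges)
    (hsub : H''.IsSub (H.addEdge f)) (hκ : k + 1 ≤ H''.kappa) (hfe : f ∈ H''.edges)
    (hVbig : k + r ≤ H''.verts.card)
    (hfS : ∀ x ∈ f, x ∉ S)
    (hfA : ∃ x ∈ f, x ∈ A) (hfB : ∃ x ∈ f, x ∈ B) : False := by
  have hfne : f.Nonempty := Finset.card_pos.mp (by omega)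
  obtain ⟨xa, hxaf, hxaA⟩ := hfA
  obtain ⟨xb, hxbf, hxbB⟩ := hfB
  by_cases h2A : 2 ≤ (f.filter (· ∈ A)).card
  · obtain ⟨u, hu, v, hv, huv⟩ := Finset.one_lt_card.mp (by omega : 1 < (f.filter (· ∈ A)).card)
    rw [Finset.mem_filter] at hu hv
    exact cross_avoid_false2 hSk' hdisj hpart hcl hfV hfne hfE hsub hκ hfe hfS
      hu.1 hu.2 hv.1 hv.2 huv hxbf hxbB
  by_cases h2B : 2 ≤ (f.filter (· ∈ B)).card
  · obtain ⟨u, hu, v, hv, huv⟩ := Finset.one_lt_card.mp (by omega : 1 < (f.filter (· ∈ B)).card)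
    rw [Finset.mem_filter] at hu hv
    exact cross_avoid_false2 hSk' hdisj.symm (by rw [hpart, Finset.union_comm])
      (fun g hg hgs => (hcl g hg hgs).symm) hfV hfne hfE hsub hκ hfe hfS
      hu.1 hu.2 hv.1 hv.2 huv hxaf hxaA
  · -- both intersections are singletons, so f = {xa, xb}
    have hsubAB : f ⊆ f.filter (· ∈ A) ∪ f.filter (· ∈ B) := by
      intro z hz
      have hzD : z ∈ H.verts \ S := Finset.mem_sdiff.mpr ⟨hfV hz, hfS z hz⟩
      rw [hpart] at hzD
      rcases Finset.mem_union.mp hzD with h | h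
      · exact Finset.mem_union_left _ (Finset.mem_filter.mpr ⟨hz, h⟩)
      · exact Finset.mem_union_right _ (Finset.mem_filter.mpr ⟨hz, h⟩)
    have hAcard : (f.filter (· ∈ A)).card = 1 := by
      have : 1 ≤ (f.filter (· ∈ A)).card :=
        Finset.card_pos.mpr ⟨xa, Finset.mem_filter.mpr ⟨hxaf, hxaA⟩⟩
      omega
    have hBcard : (f.filter (· ∈ B)).card = 1 := by
      have : 1 ≤ (f.filter (· ∈ B)).card :=
        Finset.card_pos.mpr ⟨xb, Finset.mem_filter.mpr ⟨hxbf, hxbB⟩⟩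
      omega
    obtain ⟨u, hu⟩ := Finset.card_eq_one.mp hAcard
    obtain ⟨v, hv⟩ := Finset.card_eq_one.mp hBcard
    have huf : u ∈ f ∧ u ∈ A := by
      have : u ∈ f.filter (· ∈ A) := hu ▸ Finset.mem_singleton_self u
      exact ⟨(Finset.mem_filter.mp this).1, (Finset.mem_filter.mp this).2⟩
    have hvf : v ∈ f ∧ v ∈ B := by
      have : v ∈ f.filter (· ∈ B) := hv ▸ Finset.mem_singleton_self v
      exact ⟨(Finset.mem_filter.mp this).1, (Finset.mem_filter.mp this).2⟩
    have hfuv : f = {u, v} := by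
      apply Finset.Subset.antisymm
      · intro z hz
        have := hsubAB hz
        rw [hu, hv] at this
        rcases Finset.mem_union.mp this with h | h
        · rw [Finset.mem_singleton] at h
          exact Finset.mem_insert.mpr (Or.inl h)
        · rw [Finset.mem_singleton] at h
          exact Finset.mem_insert.mpr (Or.inr (h ▸ Finset.mem_singleton_self v))
      · intro z hz
        rcases Finset.mem_insert.mp hz with rfl | h
        · exact huf.1
        · rw [Finset.mem_singleton] at h
          exact h ▸ hvf.1
    exact cross_avoid_false_r2 hr hU hSk' hdisj hpart hcl hfV hfc hfE hsub hκ hfe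
      hVbig hfS hfuv huf.2 hvf.2

end FinHypergraph
namespace FinHypergraph

attribute [local instance 10] Classical.propDecidable

lemma main_lemma (k r : ℕ) (hk : 2 ≤ k) (hr : 2 ≤ r) :
    ∀ m : ℕ, ∀ H : FinHypergraph, ∀ F : Finset (Finset ℕ),
      H.verts.card = m → H.IsUniform r → H.kappaBar ≤ k →
      (∀ f : Finset ℕ, f ⊆ H.verts → f.card = r → f ∉ H.edges → f ∉ F →
        k + 1 ≤ (H.addEdge f).kappaBar) →
      ((H.verts.powersetCard r) \ H.edges).card ≤ (m - k).choose r + F.card := by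
  intro m
  induction m using Nat.strong_induction_on with
  | _ m IH =>
  intro H F hm hU hkb hmax
  by_cases hNEF : (H.verts.powersetCard r) \ H.edges ⊆ F
  · exact le_trans (Finset.card_le_card hNEF) (Nat.le_add_left _ _)
  obtain ⟨f0, hf0, hf0F⟩ := Finset.not_subset.mp hNEF
  rw [Finset.mem_sdiff, Finset.mem_powersetCard] at hf0
  obtain ⟨⟨hf0V, hf0c⟩, hf0E⟩ := hf0
  obtain ⟨W0, hW0sub, hW0κ, hW0f, hW0U, hW0big, hW0V⟩ :=
    witness_lemma hr hU hkb hf0V hf0c hf0E (hmax f0 hf0V hf0c hf0E hf0F)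
  have hmbig : k + r ≤ m := by
    have := Finset.card_le_card hW0V
    omega
  have hκH : H.kappa ≤ k := le_trans (kappa_le_kappaBar (isSub_refl H)) hkb
  obtain ⟨S, hScut, hScard⟩ := exists_cut_of_kappa_lt (H := H) (by omega)
  have hSk : S.card ≤ k := by omega
  have hSV : S ⊆ H.verts := hScut.1
  have hC := hScut.2
  unfold Connected at hC
  push_neg at hC
  obtain ⟨u0, hu0, v0, hv0, hnr⟩ := hC
  rw [induce_verts _ Finset.sdiff_subset] at hu0 hv0
  set A := (H.verts \ S).filter
    (fun w => Relation.ReflTransGen (H.induce (H.verts \ S)).Adj u0 w) with hAdef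
  set B := (H.verts \ S) \ A with hBdef
  have hAD : A ⊆ H.verts \ S := Finset.filter_subset _ _
  have hBD : B ⊆ H.verts \ S := Finset.sdiff_subset
  have hpart : H.verts \ S = A ∪ B := (Finset.union_sdiff_of_subset hAD).symm
  have hdisj : Disjoint A B := Finset.disjoint_sdiff
  have hu0A : u0 ∈ A := Finset.mem_filter.mpr ⟨hu0, Relation.ReflTransGen.refl⟩
  have hv0B : v0 ∈ B := Finset.mem_sdiff.mpr ⟨hv0, fun h => hnr (Finset.mem_filter.mp h).2⟩
  have hcl : ∀ g ∈ H.edges, g ⊆ H.verts \ S → g ⊆ A ∨ g ⊆ B := by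
    intro g hg hgD
    by_cases hgA : ∃ x ∈ g, x ∈ A
    · left
      obtain ⟨x, hxg, hxA⟩ := hgA
      intro y hy
      refine Finset.mem_filter.mpr ⟨hgD hy, ?_⟩
      exact (Finset.mem_filter.mp hxA).2.tail ⟨g, mem_induce_edges.mpr ⟨hg, hgD⟩, hxg, hy⟩
    · right
      intro y hy
      exact Finset.mem_sdiff.mpr ⟨hgD hy, fun h => hgA ⟨y, hy, h⟩⟩
  have hAV : A ⊆ H.verts := fun z hz => (Finset.mem_sdiff.mp (hAD hz)).1
  have hBV : B ⊆ H.verts := fun z hz => (Finset.mem_sdiff.mp (hBD hz)).1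
  have hSA : Disjoint S A := by
    rw [Finset.disjoint_left]
    intro z hzS hzA
    exact (Finset.mem_sdiff.mp (hAD hzA)).2 hzS
  have hSB : Disjoint S B := by
    rw [Finset.disjoint_left]
    intro z hzS hzB
    exact (Finset.mem_sdiff.mp (hBD hzB)).2 hzS
  have hcardsplit : m = S.card + (A.card + B.card) := by
    have h1 : S ∪ (H.verts \ S) = H.verts := Finset.union_sdiff_of_subset hSV
    have h2 : Disjoint S (H.verts \ S) := Finset.disjoint_sdiff
    have h3 := Finset.card_union_of_disjoint h2
    rw [h1] at h3
    have h4 := Finset.card_union_of_disjoint hdisj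
    rw [← hpart] at h4
    omega
  have hA1 : 1 ≤ A.card := Finset.card_pos.mpr ⟨u0, hu0A⟩
  have hB1 : 1 ≤ B.card := Finset.card_pos.mpr ⟨v0, hv0B⟩
  -- the two pieces
  set H1 := H.induce (S ∪ A) with hH1def
  set H2 := H.induce (S ∪ B) with hH2def
  have hSAV : S ∪ A ⊆ H.verts := Finset.union_subset hSV hAV
  have hSBV : S ∪ B ⊆ H.verts := Finset.union_subset hSV hBV
  have h1verts : H1.verts = S ∪ A := induce_verts _ hSAV
  have h2verts : H2.verts = S ∪ B := induce_verts _ hSBV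
  have h1card : H1.verts.card = S.card + A.card := by
    rw [h1verts, Finset.card_union_of_disjoint hSA]
  have h2card : H2.verts.card = S.card + B.card := by
    rw [h2verts, Finset.card_union_of_disjoint hSB]
  have hH1edges : ∀ f : Finset ℕ, f ⊆ S ∪ A → (f ∈ H1.edges ↔ f ∈ H.edges) := by
    intro f hf
    rw [hH1def, mem_induce_edges]
    exact ⟨fun h => h.1, fun h => ⟨h, hf⟩⟩
  have hH2edges : ∀ f : Finset ℕ, f ⊆ S ∪ B → (f ∈ H2.edges ↔ f ∈ H.edges) := by
    intro f hf
    rw [hH2def, mem_induce_edges]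
    exact ⟨fun h => h.1, fun h => ⟨h, hf⟩⟩
  have hU1 : H1.IsUniform r := by
    intro g hg
    rw [hH1def, mem_induce_edges] at hg
    exact hU g hg.1
  have hU2 : H2.IsUniform r := by
    intro g hg
    rw [hH2def, mem_induce_edges] at hg
    exact hU g hg.1
  have hkb1 : H1.kappaBar ≤ k := by
    refine le_trans (kappaBar_mono ?_) hkb
    rw [hH1def]; exact induce_isSub H (S ∪ A)
  have hkb2 : H2.kappaBar ≤ k := by
    refine le_trans (kappaBar_mono ?_) hkb
    rw [hH2def]; exact induce_isSub H (S ∪ B)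
  -- exception families
  set U1 := (S.powersetCard r).filter
    (fun f => f ∉ H.edges ∧ ¬ (k + 1 ≤ (H1.addEdge f).kappaBar)) with hU1def
  set U2 := (S.powersetCard r).filter
    (fun f => f ∉ H.edges ∧ ¬ (k + 1 ≤ (H2.addEdge f).kappaBar)) with hU2def
  set FP1 := F.filter (fun f => f ⊆ S ∪ A ∧ ¬ f ⊆ S) with hFP1def
  set FP2 := F.filter (fun f => f ⊆ S ∪ B ∧ ¬ f ⊆ S) with hFP2def
  set FS := F.filter (fun f => f ⊆ S) with hFSdef
  set FX := F.filter (fun f => (∃ x ∈ f, x ∈ A) ∧ (∃ x ∈ f, x ∈ B)) with hFXdef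
  -- maximality of the pieces
  have hHmax1 : ∀ f : Finset ℕ, f ⊆ H1.verts → f.card = r → f ∉ H1.edges →
      f ∉ FP1 ∪ U1 → k + 1 ≤ (H1.addEdge f).kappaBar := by
    intro f hfV1 hfc hfE1 hfF1
    rw [h1verts] at hfV1
    have hfE : f ∉ H.edges := fun h => hfE1 ((hH1edges f hfV1).mpr h)
    by_cases hfS : f ⊆ S
    · by_contra hcon
      exact hfF1 (Finset.mem_union_right _ (Finset.mem_filter.mpr
        ⟨Finset.mem_powersetCard.mpr ⟨hfS, hfc⟩, hfE, hcon⟩))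
    · have hfF : f ∉ F := fun h =>
        hfF1 (Finset.mem_union_left _ (Finset.mem_filter.mpr ⟨h, hfV1, hfS⟩))
      have hfV : f ⊆ H.verts := hfV1.trans hSAV
      obtain ⟨W, hWsub, hWκ, hWf, hWU, hWbig, hWV⟩ :=
        witness_lemma hr hU hkb hfV hfc hfE (hmax f hfV hfc hfE hfF)
      have hfne : f.Nonempty := Finset.card_pos.mp (by omega)
      have hWinA : W.verts ⊆ S ∪ A := by
        refine confine_inA hSk hdisj hpart hcl hfV hfne hWsub hWκ hWf ?_ ?_
        · intro x hx hxS
          rcases Finset.mem_union.mp (hfV1 hx) with h | h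
          · exact absurd h hxS
          · exact h
        · obtain ⟨x, hx, hxS⟩ := Finset.not_subset.mp hfS
          exact ⟨x, hx, hxS⟩
      have hsub1 : W.IsSub (H1.addEdge f) := by
        rw [hH1def]
        exact isSub_addEdge_induce hSAV hfV1 hfne hWsub hWinA
      exact le_trans hWκ (kappa_le_kappaBar hsub1)
  have hHmax2 : ∀ f : Finset ℕ, f ⊆ H2.verts → f.card = r → f ∉ H2.edges →
      f ∉ FP2 ∪ U2 → k + 1 ≤ (H2.addEdge f).kappaBar := by
    intro f hfV2 hfc hfE2 hfF2
    rw [h2verts] at hfV2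
    have hfE : f ∉ H.edges := fun h => hfE2 ((hH2edges f hfV2).mpr h)
    by_cases hfS : f ⊆ S
    · by_contra hcon
      exact hfF2 (Finset.mem_union_right _ (Finset.mem_filter.mpr
        ⟨Finset.mem_powersetCard.mpr ⟨hfS, hfc⟩, hfE, hcon⟩))
    · have hfF : f ∉ F := fun h =>
        hfF2 (Finset.mem_union_left _ (Finset.mem_filter.mpr ⟨h, hfV2, hfS⟩))
      have hfV : f ⊆ H.verts := hfV2.trans hSBV
      obtain ⟨W, hWsub, hWκ, hWf, hWU, hWbig, hWV⟩ :=
        witness_lemma hr hU hkb hfV hfc hfE (hmax f hfV hfc hfE hfF)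
      have hfne : f.Nonempty := Finset.card_pos.mp (by omega)
      have hWinB : W.verts ⊆ S ∪ B := by
        refine confine_inA hSk hdisj.symm (by rw [hpart, Finset.union_comm])
          (fun g hg hgs => (hcl g hg hgs).symm) hfV hfne hWsub hWκ hWf ?_ ?_
        · intro x hx hxS
          rcases Finset.mem_union.mp (hfV2 hx) with h | h
          · exact absurd h hxS
          · exact h
        · obtain ⟨x, hx, hxS⟩ := Finset.not_subset.mp hfS
          exact ⟨x, hx, hxS⟩
      have hsub2 : W.IsSub (H2.addEdge f) := by
        rw [hH2def]
        exact isSub_addEdge_induce hSBV hfV2 hfne hWsub hWinB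
      exact le_trans hWκ (kappa_le_kappaBar hsub2)
  -- induction hypothesis applied to the pieces
  have hIH1 := IH (S.card + A.card) (by omega) H1 (FP1 ∪ U1) h1card hU1 hkb1 hHmax1
  have hIH2 := IH (S.card + B.card) (by omega) H2 (FP2 ∪ U2) h2card hU2 hkb2 hHmax2
  have hNE1eq : (H1.verts.powersetCard r) \ H1.edges
      = ((S ∪ A).powersetCard r) \ H.edges := by
    rw [h1verts]
    ext f
    rw [Finset.mem_sdiff, Finset.mem_sdiff]
    constructor
    · rintro ⟨hp, he⟩
      exact ⟨hp, fun h => he ((hH1edges f (Finset.mem_powersetCard.mp hp).1).mpr h)⟩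
    · rintro ⟨hp, he⟩
      exact ⟨hp, fun h => he ((hH1edges f (Finset.mem_powersetCard.mp hp).1).mp h)⟩
  have hNE2eq : (H2.verts.powersetCard r) \ H2.edges
      = ((S ∪ B).powersetCard r) \ H.edges := by
    rw [h2verts]
    ext f
    rw [Finset.mem_sdiff, Finset.mem_sdiff]
    constructor
    · rintro ⟨hp, he⟩
      exact ⟨hp, fun h => he ((hH2edges f (Finset.mem_powersetCard.mp hp).1).mpr h)⟩
    · rintro ⟨hp, he⟩
      exact ⟨hp, fun h => he ((hH2edges f (Finset.mem_powersetCard.mp hp).1).mp h)⟩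
  rw [hNE1eq] at hIH1
  rw [hNE2eq] at hIH2
  -- counting
  have hmemNE : ∀ f : Finset ℕ, f ∈ (H.verts.powersetCard r) \ H.edges ↔
      (f ⊆ H.verts ∧ f.card = r ∧ f ∉ H.edges) := by
    intro f
    rw [Finset.mem_sdiff, Finset.mem_powersetCard]
    tauto
  have hsubSAB : ∀ {f : Finset ℕ}, f ⊆ S ∪ A → f ⊆ S ∪ B → f ⊆ S := by
    intro f h1 h2 z hz
    rcases Finset.mem_union.mp (h1 hz) with h | h
    · exact h
    · rcases Finset.mem_union.mp (h2 hz) with h' | h'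
      · exact h'
      · exact absurd h' (Finset.disjoint_left.mp hdisj h)
  have hNEsplit : ((H.verts.powersetCard r) \ H.edges) ⊆
      (((H.verts.powersetCard r) \ H.edges).filter
        (fun f => (∃ x ∈ f, x ∈ A) ∧ (∃ x ∈ f, x ∈ B))) ∪
      ((((S ∪ A).powersetCard r) \ H.edges) ∪ (((S ∪ B).powersetCard r) \ H.edges)) := by
    intro f hf
    obtain ⟨hfV, hfc, hfE⟩ := (hmemNE f).mp hf
    by_cases hfA : ∃ x ∈ f, x ∈ A
    · by_cases hfB : ∃ x ∈ f, x ∈ B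
      · exact Finset.mem_union_left _ (Finset.mem_filter.mpr ⟨hf, hfA, hfB⟩)
      · refine Finset.mem_union_right _ (Finset.mem_union_left _ (Finset.mem_sdiff.mpr
          ⟨Finset.mem_powersetCard.mpr ⟨?_, hfc⟩, hfE⟩))
        intro z hz
        by_cases hzS : z ∈ S
        · exact Finset.mem_union_left _ hzS
        · have hz2 : z ∈ A ∪ B := hpart ▸ Finset.mem_sdiff.mpr ⟨hfV hz, hzS⟩
          rcases Finset.mem_union.mp hz2 with h | h
          · exact Finset.mem_union_right _ h
          · exact absurd ⟨z, hz, h⟩ hfB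
    · refine Finset.mem_union_right _ (Finset.mem_union_right _ (Finset.mem_sdiff.mpr
        ⟨Finset.mem_powersetCard.mpr ⟨?_, hfc⟩, hfE⟩))
      intro z hz
      by_cases hzS : z ∈ S
      · exact Finset.mem_union_left _ hzS
      · have hz2 : z ∈ A ∪ B := hpart ▸ Finset.mem_sdiff.mpr ⟨hfV hz, hzS⟩
        rcases Finset.mem_union.mp hz2 with h | h
        · exact absurd ⟨z, hz, h⟩ hfA
        · exact Finset.mem_union_right _ h
  have hinter : ((((S ∪ A).powersetCard r) \ H.edges) ∩ (((S ∪ B).powersetCard r) \ H.edges))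
      = ((S.powersetCard r) \ H.edges) := by
    ext f
    rw [Finset.mem_inter, Finset.mem_sdiff, Finset.mem_sdiff, Finset.mem_sdiff,
      Finset.mem_powersetCard, Finset.mem_powersetCard, Finset.mem_powersetCard]
    constructor
    · rintro ⟨⟨⟨h1, hc⟩, he⟩, ⟨⟨h2, _⟩, _⟩⟩
      exact ⟨⟨hsubSAB h1 h2, hc⟩, he⟩
    · rintro ⟨⟨h1, hc⟩, he⟩
      exact ⟨⟨⟨h1.trans Finset.subset_union_left, hc⟩, he⟩,
        ⟨⟨h1.trans Finset.subset_union_left, hc⟩, he⟩⟩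
  have hUsub : U1 ∪ U2 ⊆ ((S.powersetCard r) \ H.edges) := by
    intro f hf
    rcases Finset.mem_union.mp hf with h | h
    · rw [hU1def, Finset.mem_filter] at h
      exact Finset.mem_sdiff.mpr ⟨h.1, h.2.1⟩
    · rw [hU2def, Finset.mem_filter] at h
      exact Finset.mem_sdiff.mpr ⟨h.1, h.2.1⟩
  have hUint : U1 ∩ U2 ⊆ FS := by
    intro f hf
    rw [Finset.mem_inter] at hf
    obtain ⟨h1, h2⟩ := hf
    rw [hU1def, Finset.mem_filter, Finset.mem_powersetCard] at h1
    rw [hU2def, Finset.mem_filter, Finset.mem_powersetCard] at h2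
    obtain ⟨⟨hfS, hfc⟩, hfE, hw1⟩ := h1
    obtain ⟨-, -, hw2⟩ := h2
    rw [hFSdef, Finset.mem_filter]
    refine ⟨?_, hfS⟩
    by_contra hfF
    have hfV : f ⊆ H.verts := hfS.trans hSV
    obtain ⟨W, hWsub, hWκ, hWf, hWU, hWbig, hWV⟩ :=
      witness_lemma hr hU hkb hfV hfc hfE (hmax f hfV hfc hfE hfF)
    have hfne : f.Nonempty := Finset.card_pos.mp (by omega)
    rcases confine_inS hSk hdisj hpart hcl hfV hfne hWsub hWκ hfS with h | h
    · refine hw1 (le_trans hWκ (kappa_le_kappaBar ?_))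
      rw [hH1def]
      exact isSub_addEdge_induce hSAV (hfS.trans Finset.subset_union_left) hfne hWsub h
    · refine hw2 (le_trans hWκ (kappa_le_kappaBar ?_))
      rw [hH2def]
      exact isSub_addEdge_induce hSBV (hfS.trans Finset.subset_union_left) hfne hWsub h
  have hUcard : U1.card + U2.card ≤ ((S.powersetCard r) \ H.edges).card + FS.card := by
    have h1 := Finset.card_union_add_card_inter U1 U2
    have h2 := Finset.card_le_card hUsub
    have h3 := Finset.card_le_card hUint
    omega
  -- the four parts of F are pairwise disjoint
  have d12 : Disjoint FP1 FP2 := by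
    rw [Finset.disjoint_left]
    intro f h1 h2
    rw [hFP1def, Finset.mem_filter] at h1
    rw [hFP2def, Finset.mem_filter] at h2
    exact h1.2.2 (hsubSAB h1.2.1 h2.2.1)
  have d1S : Disjoint FP1 FS := by
    rw [Finset.disjoint_left]
    intro f h1 h2
    rw [hFP1def, Finset.mem_filter] at h1
    rw [hFSdef, Finset.mem_filter] at h2
    exact h1.2.2 h2.2
  have d2S : Disjoint FP2 FS := by
    rw [Finset.disjoint_left]
    intro f h1 h2
    rw [hFP2def, Finset.mem_filter] at h1
    rw [hFSdef, Finset.mem_filter] at h2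
    exact h1.2.2 h2.2
  have d1X : Disjoint FP1 FX := by
    rw [Finset.disjoint_left]
    intro f h1 h2
    rw [hFP1def, Finset.mem_filter] at h1
    rw [hFXdef, Finset.mem_filter] at h2
    obtain ⟨x, hx, hxB⟩ := h2.2.2
    rcases Finset.mem_union.mp (h1.2.1 hx) with h | h
    · exact Finset.disjoint_left.mp hSB h hxB
    · exact Finset.disjoint_left.mp hdisj h hxB
  have d2X : Disjoint FP2 FX := by
    rw [Finset.disjoint_left]
    intro f h1 h2
    rw [hFP2def, Finset.mem_filter] at h1
    rw [hFXdef, Finset.mem_filter] at h2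
    obtain ⟨x, hx, hxA⟩ := h2.2.1
    rcases Finset.mem_union.mp (h1.2.1 hx) with h | h
    · exact Finset.disjoint_left.mp hSA h hxA
    · exact Finset.disjoint_left.mp hdisj hxA h
  have dSX : Disjoint FS FX := by
    rw [Finset.disjoint_left]
    intro f h1 h2
    rw [hFSdef, Finset.mem_filter] at h1
    rw [hFXdef, Finset.mem_filter] at h2
    obtain ⟨x, hx, hxA⟩ := h2.2.1
    exact Finset.disjoint_left.mp hSA (h1.2 hx) hxA
  have hFdisjcard : FP1.card + FP2.card + FS.card + FX.card ≤ F.card := by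
    have hsubF : ((FP1 ∪ FP2) ∪ (FS ∪ FX)) ⊆ F := by
      intro f hf
      rcases Finset.mem_union.mp hf with h | h <;> rcases Finset.mem_union.mp h with h | h
      · exact Finset.mem_of_mem_filter f (hFP1def ▸ h)
      · exact Finset.mem_of_mem_filter f (hFP2def ▸ h)
      · exact Finset.mem_of_mem_filter f (hFSdef ▸ h)
      · exact Finset.mem_of_mem_filter f (hFXdef ▸ h)
    have hbig : Disjoint (FP1 ∪ FP2) (FS ∪ FX) := by
      rw [Finset.disjoint_union_left, Finset.disjoint_union_right, Finset.disjoint_union_right]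
      exact ⟨⟨d1S, d1X⟩, d2S, d2X⟩
    have hc := Finset.card_le_card hsubF
    rw [Finset.card_union_of_disjoint hbig, Finset.card_union_of_disjoint d12,
      Finset.card_union_of_disjoint dSX] at hc
    omega
  have e1 := Finset.card_le_card hNEsplit
  have e2 := Finset.card_union_le (((H.verts.powersetCard r) \ H.edges).filter
      (fun f => (∃ x ∈ f, x ∈ A) ∧ (∃ x ∈ f, x ∈ B)))
    ((((S ∪ A).powersetCard r) \ H.edges) ∪ (((S ∪ B).powersetCard r) \ H.edges))
  have e3 := Finset.card_union_add_card_inter (((S ∪ A).powersetCard r) \ H.edges)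
    (((S ∪ B).powersetCard r) \ H.edges)
  rw [hinter] at e3
  have e4 := Finset.card_union_le FP1 U1
  have e5 := Finset.card_union_le FP2 U2
  rcases Nat.lt_or_ge S.card k with hslt | hsge
  · -- minimum cut smaller than k : every crossing non-edge lies in F
    have hCNE : (((H.verts.powersetCard r) \ H.edges).filter
        (fun f => (∃ x ∈ f, x ∈ A) ∧ (∃ x ∈ f, x ∈ B))) ⊆ FX := by
      intro f hf
      rw [Finset.mem_filter] at hf
      obtain ⟨hfNE, hfA, hfB⟩ := hf
      obtain ⟨hfV, hfc, hfE⟩ := (hmemNE f).mp hfNE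
      rw [hFXdef, Finset.mem_filter]
      refine ⟨?_, hfA, hfB⟩
      by_contra hfF
      obtain ⟨W, hWsub, hWκ, hWf, hWU, hWbig, hWV⟩ :=
        witness_lemma hr hU hkb hfV hfc hfE (hmax f hfV hfc hfE hfF)
      have hfne : f.Nonempty := Finset.card_pos.mp (by omega)
      by_cases hfS : ∃ x ∈ f, x ∈ S
      · exact cross_meet_false hSk hdisj hpart hcl hfV hfne hWsub hWκ hWf hfA hfB hfS
      · push_neg at hfS
        exact cross_avoid_false hr hU hslt hdisj hpart hcl hfV hfc hfE hWsub hWκ hWf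
          hWbig hfS hfA hfB
    have hCNEcard := Finset.card_le_card hCNE
    have hchoose : ((S.card + A.card) - k).choose r + ((S.card + B.card) - k).choose r
        ≤ (m - k).choose r := by
      refine le_trans (choose_add_choose_le (by omega) _ _) (Nat.choose_le_choose r ?_)
      omega
    omega
  · -- minimum cut of size exactly k
    have hskEq : S.card = k := le_antisymm hSk hsge
    have hCNE : (((H.verts.powersetCard r) \ H.edges).filter
        (fun f => (∃ x ∈ f, x ∈ A) ∧ (∃ x ∈ f, x ∈ B))) ⊆
        ((((A ∪ B).powersetCard r) \ ((A.powersetCard r) ∪ (B.powersetCard r))) ∪ FX) := by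
      intro f hf
      rw [Finset.mem_filter] at hf
      obtain ⟨hfNE, hfA, hfB⟩ := hf
      obtain ⟨hfV, hfc, hfE⟩ := (hmemNE f).mp hfNE
      by_cases hfF : f ∈ F
      · refine Finset.mem_union_right _ ?_
        rw [hFXdef, Finset.mem_filter]
        exact ⟨hfF, hfA, hfB⟩
      · by_cases hfS : ∃ x ∈ f, x ∈ S
        · exfalso
          obtain ⟨W, hWsub, hWκ, hWf, hWU, hWbig, hWV⟩ :=
            witness_lemma hr hU hkb hfV hfc hfE (hmax f hfV hfc hfE hfF)
          have hfne : f.Nonempty := Finset.card_pos.mp (by omega)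
          exact cross_meet_false hSk hdisj hpart hcl hfV hfne hWsub hWκ hWf hfA hfB hfS
        · push_neg at hfS
          refine Finset.mem_union_left _ (Finset.mem_sdiff.mpr
            ⟨Finset.mem_powersetCard.mpr ⟨?_, hfc⟩, ?_⟩)
          · intro z hz
            exact hpart ▸ Finset.mem_sdiff.mpr ⟨hfV hz, hfS z hz⟩
          · intro h
            rcases Finset.mem_union.mp h with h | h
            · rw [Finset.mem_powersetCard] at h
              obtain ⟨x, hx, hxB⟩ := hfB
              exact Finset.disjoint_left.mp hdisj (h.1 hx) hxB
            · rw [Finset.mem_powersetCard] at h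
              obtain ⟨x, hx, hxA⟩ := hfA
              exact Finset.disjoint_left.mp hdisj hxA (h.1 hx)
    have hCNEcard := Finset.card_le_card hCNE
    have e6 := Finset.card_union_le
      (((A ∪ B).powersetCard r) \ ((A.powersetCard r) ∪ (B.powersetCard r))) FX
    have hPsub : (A.powersetCard r) ∪ (B.powersetCard r) ⊆ (A ∪ B).powersetCard r :=
      Finset.union_subset (Finset.powersetCard_mono Finset.subset_union_left)
        (Finset.powersetCard_mono Finset.subset_union_right)
    have hPdisj : Disjoint (A.powersetCard r) (B.powersetCard r) := by
      rw [Finset.disjoint_left]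
      intro s h1 h2
      rw [Finset.mem_powersetCard] at h1 h2
      have hpos : 0 < s.card := by rw [h1.2]; omega
      obtain ⟨z, hz⟩ := Finset.card_pos.mp hpos
      exact Finset.disjoint_left.mp hdisj (h1.1 hz) (h2.1 hz)
    have hCA := Finset.card_sdiff_add_card_eq_card hPsub
    rw [Finset.card_union_of_disjoint hPdisj, Finset.card_powersetCard,
      Finset.card_powersetCard, Finset.card_powersetCard,
      Finset.card_union_of_disjoint hdisj] at hCA
    have ea : S.card + A.card - k = A.card := by omega
    have eb : S.card + B.card - k = B.card := by omega
    have em : m - k = A.card + B.card := by omega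
    rw [ea] at hIH1
    rw [eb] at hIH2
    rw [em]
    omega


end FinHypergraph

/-- Every vertex-`k`-maximal `r`-uniform hypergraph on `n ≥ k + 1`
vertices has at least `C(n,r) - C(n-k,r)` edges. -/
theorem stmt_8 (n k r : ℕ) (hk : 2 ≤ k) (hr : 2 ≤ r) (hn : k + 1 ≤ n)
    (H : FinHypergraph) (hcard : H.verts.card = n) (hH : H.VertexKMaximal r k) :
    n.choose r - (n - k).choose r ≤ H.edges.card := by
  obtain ⟨hU, hkb, hmax⟩ := hH
  have hmain := FinHypergraph.main_lemma k r hk hr n H ∅ hcard hU hkb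
    (fun f h1 h2 h3 _ => hmax f h1 h2 h3)
  have hpc : H.edges ⊆ H.verts.powersetCard r := fun g hg =>
    Finset.mem_powersetCard.mpr ⟨H.edge_sub g hg, hU g hg⟩
  have h1 : (H.verts.powersetCard r).card = n.choose r := by
    rw [Finset.card_powersetCard, hcard]
  have h2 := Finset.card_sdiff_add_card_eq_card hpc
  rw [Finset.card_empty] at hmain
  omega
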